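/- Let p be a prime and let A be an F_p-brace that is strongly nilpotent of degree k, with 2^k < p. Define a·b = Σ_{i=0}^{p−2} 2^{−i}((2^i a) * b) for a,b ∈ A, where 2^i a denotes the sum of 2^i copies of a and 2^{−i} denotes the scalar action of the inverse of 2^i in F_p. Then (a+b)·c = a·c + b·c and a·(b+c) = a·b + a·c for all a,b,c ∈ A. -/

import Mathlib

/-- A left brace: `(A,+)` abelian group, `(A,∘)` a group, with
`a ∘ (b + c) + a = a ∘ b + a ∘ c`. -/
structure LeftBrace (A : Type) [AddCommGroup A] where
  circ : A → A → A
  one : A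
  inv : A → A
  circ_assoc : ∀ a b c, circ (circ a b) c = circ a (circ b c)
  one_circ : ∀ a, circ one a = a
  circ_one : ∀ a, circ a one = a
  inv_circ : ∀ a, circ (inv a) a = one
  circ_add : ∀ a b c, circ a (b + c) + a = circ a b + circ a c

namespace LeftBrace

variable {A : Type} [AddCommGroup A]

/-- `a * b = a ∘ b - a - b`. -/
def star (B : LeftBrace A) (a b : A) : A := B.circ a b - a - b

/-- `lchain B n = Aⁿ` for `n ≥ 1` (and `lchain B 0 = ⊤`): `A¹ = A`, and
`Aⁿ⁺¹` is the additive subgroup generated by `{a * b : a ∈ A, b ∈ Aⁿ}`. -/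
def lchain (B : LeftBrace A) : ℕ → AddSubgroup A
  | 0 => ⊤
  | 1 => ⊤
  | n + 2 => AddSubgroup.closure {x | ∃ a : A, ∃ b ∈ B.lchain (n + 1), x = B.star a b}

/-- `rchain B n = A⁽ⁿ⁾` for `n ≥ 1`: `A⁽¹⁾ = A`, and `A⁽ⁿ⁺¹⁾` is the additive
subgroup generated by `{a * b : a ∈ A⁽ⁿ⁾, b ∈ A}`. -/
def rchain (B : LeftBrace A) : ℕ → AddSubgroup A
  | 0 => ⊤
  | 1 => ⊤
  | n + 2 => AddSubgroup.closure {x | ∃ a ∈ B.rchain (n + 1), ∃ b : A, x = B.star a b}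

/-- `schain B n = A^[n]` for `n ≥ 1`:  `A^[1] = A`, and
`A^[i+1] = Σ_{j=1}^{i} A^[j] * A^[i+1-j]` (additive subgroup generated by the
corresponding products). -/
def schain (B : LeftBrace A) : ℕ → AddSubgroup A
  | 0 => ⊤
  | 1 => ⊤
  | n + 2 => AddSubgroup.closure
      {x | ∃ j : Fin (n + 1), ∃ u ∈ B.schain (j.1 + 1), ∃ v ∈ B.schain (n + 1 - j.1),
        x = B.star u v}

/-- An ideal of a left brace: an additive subgroup, normal in `(A,∘)`, and
invariant under all maps `λ_a(x) = a * x + x`. -/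
structure IsIdeal (B : LeftBrace A) (I : AddSubgroup A) : Prop where
  lam_mem : ∀ a : A, ∀ x ∈ I, B.star a x + x ∈ I
  conj_mem : ∀ a : A, ∀ x ∈ I, B.circ (B.circ a x) (B.inv a) ∈ I

/-- Left chain of an ideal: `ichainL B I n = Iⁿ⁺¹`, where `I¹ = I` and `Iⁱ⁺¹`
is the additive subgroup generated by `{a * b : a ∈ I, b ∈ Iⁱ}`. -/
def ichainL (B : LeftBrace A) (I : AddSubgroup A) : ℕ → AddSubgroup A
  | 0 => I
  | n + 1 => AddSubgroup.closure {x | ∃ a ∈ I, ∃ b ∈ B.ichainL I n, x = B.star a b}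

/-- Right chain of an ideal: `ichainR B I n = I⁽ⁿ⁺¹⁾`, where `I⁽¹⁾ = I` and
`I⁽ⁱ⁺¹⁾` is the additive subgroup generated by `{a * b : a ∈ I⁽ⁱ⁾, b ∈ I}`. -/
def ichainR (B : LeftBrace A) (I : AddSubgroup A) : ℕ → AddSubgroup A
  | 0 => I
  | n + 1 => AddSubgroup.closure {x | ∃ a ∈ B.ichainR I n, ∃ b ∈ I, x = B.star a b}

end LeftBrace

variable {A : Type} [AddCommGroup A]

/-- `a · b = Σ_{i=0}^{p-2} 2^{-i}((2^i a) * b)`, where `2^i a` is the sum of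
`2^i` copies of `a` and `2^{-i}` acts as the inverse of `2^i` in `F_p`. -/
def braceMul (p : ℕ) [Module (ZMod p) A] (B : LeftBrace A) (a b : A) : A :=
  ∑ i ∈ Finset.range (p - 1), ((2 : ZMod p) ^ i)⁻¹ • B.star ((2 ^ i : ℕ) • a) b


namespace LeftBrace

variable {A : Type} [AddCommGroup A] (B : LeftBrace A)

lemma circ_add' (a x y : A) : B.circ a (x + y) = B.circ a x + B.circ a y - a :=
  eq_sub_of_add_eq (B.circ_add a x y)

lemma circ_zero (a : A) : B.circ a 0 = a := by
  have h := B.circ_add a 0 0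
  rw [add_zero] at h
  exact (add_left_cancel h).symm

lemma one_eq_zero : B.one = 0 := by
  have h1 := B.circ_zero B.one
  have h2 := B.one_circ 0
  rw [h2] at h1; exact h1.symm

lemma zero_circ (a : A) : B.circ 0 a = a := by
  rw [← B.one_eq_zero]; exact B.one_circ a

lemma star_add_right (a x y : A) : B.star a (x + y) = B.star a x + B.star a y := by
  simp only [star, circ_add']; abel

lemma star_zero_right (a : A) : B.star a 0 = 0 := by
  simp [star, circ_zero]

lemma star_zero_left (a : A) : B.star 0 a = 0 := by
  simp [star, zero_circ]

/-- `a * b = λ_a(b) - b` viewed through `circ`: the key composition identity. -/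
lemma star_circ_left (u v w : A) :
    B.star (B.circ u v) w = B.star u w + B.star v w + B.star u (B.star v w) := by
  have hv : B.circ v w = (v + w) + (B.circ v w - v - w) := by abel
  simp only [star]
  rw [B.circ_assoc]
  conv_lhs => rw [hv]
  rw [B.circ_add', B.circ_add']
  abel

lemma schain_zero : B.schain 0 = ⊤ := by rw [schain]
lemma schain_one : B.schain 1 = ⊤ := by rw [schain]
lemma schain_add_two (n : ℕ) : B.schain (n + 2) = AddSubgroup.closure
      {x | ∃ j : Fin (n + 1), ∃ u ∈ B.schain (j.1 + 1), ∃ v ∈ B.schain (n + 1 - j.1),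
        x = B.star u v} := by rw [schain]

lemma star_mem_schain {i j : ℕ} (hi : 1 ≤ i) (hj : 1 ≤ j) {u v : A}
    (hu : u ∈ B.schain i) (hv : v ∈ B.schain j) : B.star u v ∈ B.schain (i + j) := by
  obtain ⟨i, rfl⟩ : ∃ i', i = i' + 1 := ⟨i - 1, by omega⟩
  obtain ⟨j, rfl⟩ : ∃ j', j = j' + 1 := ⟨j - 1, by omega⟩
  have h : i + 1 + (j + 1) = (i + j) + 2 := by omega
  rw [h, schain_add_two]
  apply AddSubgroup.subset_closure
  refine ⟨⟨i, by omega⟩, u, hu, v, ?_, rfl⟩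
  have h2 : i + j + 1 - i = j + 1 := by omega
  rw [h2]; exact hv

lemma schain_succ_le : ∀ n, B.schain (n + 1) ≤ B.schain n := by
  intro n
  induction n using Nat.strong_induction_on with
  | _ n ih =>
    match n with
    | 0 => rw [B.schain_one, B.schain_zero]
    | 1 => rw [B.schain_one]; exact le_top
    | (m + 2) =>
      rw [show m + 2 + 1 = (m + 1) + 2 from rfl, schain_add_two]
      rw [(AddSubgroup.closure_le _)]
      rintro x ⟨⟨j, hj⟩, u, hu, v, hv, rfl⟩
      simp only [SetLike.mem_coe]
      by_cases hcase : j = m + 1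
      · subst hcase
        have hu' : u ∈ B.schain (m + 1) := ih (m + 1) (by omega) hu
        have hv' : v ∈ B.schain 1 := by
          have : m + 1 + 1 - (m + 1) = 1 := by omega
          rw [this] at hv; exact hv
        have := B.star_mem_schain (i := m + 1) (j := 1) (by omega) (by omega) hu' hv'
        exact this
      · have hjm : j ≤ m := by omega
        have hv' : v ∈ B.schain (m + 1 - j) := by
          have h1 : m + 1 + 1 - j = (m + 1 - j) + 1 := by omega
          rw [h1] at hv
          exact ih (m + 1 - j) (by omega) hv
        have := B.star_mem_schain (i := j + 1) (j := m + 1 - j) (by omega) (by omega) hu hv'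
        have he : j + 1 + (m + 1 - j) = m + 2 := by omega
        rw [he] at this; exact this

lemma schain_antitone {m n : ℕ} (h : m ≤ n) : B.schain n ≤ B.schain m := by
  induction n, h using Nat.le_induction with
  | base => exact le_rfl
  | succ n hmn ih => exact le_trans (B.schain_succ_le n) ih

lemma schain_eq_bot {k n : ℕ} (hnil : B.schain k = ⊥) (h : k ≤ n) : B.schain n = ⊥ :=
  le_antisymm (hnil ▸ B.schain_antitone h) bot_le


end LeftBrace


namespace LeftBrace

variable {A : Type} [AddCommGroup A] (B : LeftBrace A)

/-- `star u ·` as an additive homomorphism. -/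
def starHom (u : A) : A →+ A := AddMonoidHom.mk' (fun z => B.star u z) (B.star_add_right u)

@[simp] lemma starHom_apply (u z : A) : B.starHom u z = B.star u z := rfl

variable {k : ℕ}

lemma mu_iter_mem (u e : A) (j : ℕ) :
    (fun z => B.star u z)^[j] e ∈ B.schain (j + 1) := by
  induction j with
  | zero => rw [B.schain_one]; exact AddSubgroup.mem_top e
  | succ j ih =>
    rw [Function.iterate_succ_apply']
    have := B.star_mem_schain (i := 1) (j := j + 1) le_rfl (by omega)
      (by rw [B.schain_one]; exact AddSubgroup.mem_top u) ih
    rwa [show 1 + (j + 1) = j + 1 + 1 from by omega] at this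

lemma mu_iter_k (hnil : B.schain k = ⊥) (u e : A) :
    (fun z => B.star u z)^[k] e = 0 := by
  have h := B.mu_iter_mem u e k
  have hb : B.schain (k + 1) = ⊥ := B.schain_eq_bot hnil (by omega)
  rw [hb] at h
  simpa using h

/-- Key splitting identity: `(u+e)*w - u*w = v'*w + u*(v'*w)` with
`v' = Σ (-1)^j μ_u^j e` (the Neumann series for `λ_u⁻¹ e`). -/
lemma split (hnil : B.schain k = ⊥) (u e w : A) :
    B.star (u + e) w - B.star u w =
      B.star (∑ j ∈ Finset.range k, (-1 : ℤ) ^ j • (fun z => B.star u z)^[j] e) w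
      + B.star u (B.star (∑ j ∈ Finset.range k, (-1 : ℤ) ^ j • (fun z => B.star u z)^[j] e) w) := by
  set T : ℕ → A := fun j => (-1 : ℤ) ^ j • (fun z => B.star u z)^[j] e with hT
  set v' : A := ∑ j ∈ Finset.range k, T j with hv'
  have hsv : B.star u v' = ∑ j ∈ Finset.range k, -T (j + 1) := by
    show B.starHom u v' = _
    rw [hv', map_sum]
    refine Finset.sum_congr rfl fun j _ => ?_
    rw [hT]
    simp only [map_zsmul, starHom_apply, pow_succ, mul_neg_one, neg_zsmul, neg_neg,
      ← Function.iterate_succ_apply' (fun z => B.star u z)]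
  have htel : v' + B.star u v' = e := by
    rw [hsv, hv', ← Finset.sum_add_distrib]
    have : ∀ j ∈ Finset.range k, T j + -T (j + 1) = T j - T (j + 1) := fun j _ => by abel
    rw [Finset.sum_congr rfl this, Finset.sum_range_sub']
    have hT0 : T 0 = e := by rw [hT]; simp
    have hTk : T k = 0 := by rw [hT]; simp only [B.mu_iter_k hnil, smul_zero]
    rw [hT0, hTk, sub_zero]
  have hcirc : B.circ u v' = u + e := by
    have h1 : B.circ u v' = u + (v' + B.star u v') := by simp only [star]; abel
    rw [h1, htel]
  have := B.star_circ_left u v' w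
  rw [hcirc] at this
  rw [this]; abel

/-- The class of "good" functions: built from constants in the filtration by
sums, translations and star-products (allowing a bare `x` on the left). -/
inductive SGood (B : LeftBrace A) : ℕ → (A → A) → Prop
  | const {d : ℕ} {z : A} (hd : 1 ≤ d) (hz : z ∈ B.schain d) : SGood B d fun _ => z
  | add {d G H} : SGood B d G → SGood B d H → SGood B d fun x => G x + H x
  | neg {d G} : SGood B d G → SGood B d fun x => -(G x)
  | mono {d d' G} : SGood B d G → 1 ≤ d' → d' ≤ d → SGood B d' G
  | translate {d G} (z : A) : SGood B d G → SGood B d fun x => G (x + z)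
  | star {a b G H} : SGood B a G → SGood B b H → SGood B (a + b) fun x => B.star (G x) (H x)
  | lstar {b H} : SGood B b H → SGood B b fun x => B.star x (H x)

namespace SGood

variable {B}

lemma congr' {d : ℕ} {G G' : A → A} (h : SGood B d G) (he : ∀ x, G x = G' x) :
    SGood B d G' := by
  have : G = G' := funext he
  rwa [this] at h

lemma pos {d : ℕ} {G : A → A} (h : SGood B d G) : 1 ≤ d := by
  induction h with
  | const hd _ => exact hd
  | add _ _ ih _ => exact ih
  | neg _ ih => exact ih
  | mono _ h1 _ _ => exact h1
  | translate _ _ ih => exact ih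
  | star _ _ ih _ => omega
  | lstar _ ih => exact ih

lemma mem {d : ℕ} {G : A → A} (h : SGood B d G) : ∀ x, G x ∈ B.schain d := by
  induction h with
  | const _ hz => exact fun _ => hz
  | add _ _ ih1 ih2 => exact fun x => AddSubgroup.add_mem _ (ih1 x) (ih2 x)
  | neg _ ih => exact fun x => AddSubgroup.neg_mem _ (ih x)
  | mono _ h1 h2 ih => exact fun x => B.schain_antitone h2 (ih x)
  | translate z _ ih => exact fun x => ih (x + z)
  | star hG hH ihG ihH =>
    exact fun x => B.star_mem_schain hG.pos hH.pos (ihG x) (ihH x)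
  | lstar hH ih =>
    intro x
    have := B.star_mem_schain (i := 1) (j := _) le_rfl hH.pos
      (by rw [B.schain_one]; exact AddSubgroup.mem_top x) (ih x)
    exact B.schain_antitone (by omega) this

lemma zero {d : ℕ} (hd : 1 ≤ d) : SGood B d (fun _ => (0 : A)) :=
  SGood.const hd (AddSubgroup.zero_mem _)

lemma sum {d : ℕ} {ι : Type*} {s : Finset ι} {f : ι → A → A} (hd : 1 ≤ d)
    (h : ∀ j ∈ s, SGood B d (f j)) : SGood B d (fun x => ∑ j ∈ s, f j x) := by
  classical
  induction s using Finset.induction_on with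
  | empty => exact (SGood.zero hd).congr' (fun x => by simp)
  | insert a s hj ih =>
    exact (((h a (Finset.mem_insert_self a s)).add
      (ih fun j hjs => h j (Finset.mem_insert_of_mem hjs))).congr'
      (fun x => by rw [Finset.sum_insert hj]))

lemma negOnePow_smul {d : ℕ} {G : A → A} (h : SGood B d G) (j : ℕ) :
    SGood B d (fun x => (-1 : ℤ) ^ j • G x) := by
  rcases Nat.even_or_odd j with hj | hj
  · exact h.congr' fun x => by rw [hj.neg_one_pow, one_zsmul]
  · exact h.neg.congr' fun x => by rw [hj.neg_one_pow, neg_one_zsmul]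

end SGood

end LeftBrace

namespace LeftBrace

variable {A : Type} [AddCommGroup A] {B : LeftBrace A} {k : ℕ}

/-- Difference stability: differencing a good function by `y ∈ schain dy`
raises its filtration degree by `dy`. -/
lemma SGood.dstab (hnil : B.schain k = ⊥) {d : ℕ} {G : A → A} (h : SGood B d G) :
    ∀ {dy : ℕ} (y : A), 1 ≤ dy → y ∈ B.schain dy →
      SGood B (d + dy) (fun x => G (x + y) - G x) := by
  induction h with
  | const hd hz =>
    intro dy y hdy hy
    exact (SGood.zero (by omega)).congr' (fun x => by simp)
  | add h1 h2 ih1 ih2 =>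
    intro dy y hdy hy
    exact ((ih1 y hdy hy).add (ih2 y hdy hy)).congr' (fun x => by simp only [add_sub_add_comm])
  | neg h ih =>
    intro dy y hdy hy
    exact (ih y hdy hy).neg.congr' (fun x => by simp only [neg_sub, neg_sub_neg])
  | mono h hd1 hd2 ih =>
    intro dy y hdy hy
    exact (ih y hdy hy).mono (by omega) (by omega)
  | translate z h ih =>
    intro dy y hdy hy
    exact ((ih y hdy hy).translate z).congr' (fun x => by rw [add_right_comm])
  | @star a b G H hG hH ihG ihH =>
    intro dy y hdy hy
    have ha := hG.pos
    have hb := hH.pos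
    set M : ℕ → A → A := fun j x => (fun z => B.star (G x) z)^[j] (G (x + y) - G x) with hM
    have hMs : ∀ j, SGood B (a + dy) (M j) := by
      intro j
      induction j with
      | zero => exact (ihG y hdy hy).congr' (fun x => rfl)
      | succ j ihj =>
        exact ((hG.star ihj).mono (by omega) (by omega)).congr'
          (fun x => (Function.iterate_succ_apply' _ _ _).symm)
    set V : A → A := fun x => ∑ j ∈ Finset.range k, (-1 : ℤ) ^ j • M j x with hV
    have hVg : SGood B (a + dy) V := SGood.sum (by omega) (fun j _ => (hMs j).negOnePow_smul j)
    have key : ∀ x, B.star (G (x + y)) (H (x + y)) - B.star (G x) (H x)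
        = B.star (G (x + y)) (H (x + y) - H x)
          + (B.star (V x) (H x) + B.star (G x) (B.star (V x) (H x))) := by
      intro x
      have hsplit := B.split hnil (G x) (G (x + y) - G x) (H x)
      rw [show G x + (G (x + y) - G x) = G (x + y) by abel] at hsplit
      have hVx : (∑ j ∈ Finset.range k,
          (-1 : ℤ) ^ j • (fun z => B.star (G x) z)^[j] (G (x + y) - G x)) = V x := rfl
      rw [hVx] at hsplit
      have hr : B.star (G (x + y)) (H (x + y)) =
          B.star (G (x + y)) (H x) + B.star (G (x + y)) (H (x + y) - H x) := by
        rw [← B.star_add_right]; congr 1; abel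
      rw [hr, ← hsplit]; abel
    have T1 : SGood B (a + b + dy) (fun x => B.star (G (x + y)) (H (x + y) - H x)) :=
      ((hG.translate y).star (ihH y hdy hy)).mono (by omega) (by omega)
    have T2 : SGood B (a + b + dy) (fun x => B.star (V x) (H x)) :=
      (hVg.star hH).mono (by omega) (by omega)
    have T3 : SGood B (a + b + dy) (fun x => B.star (G x) (B.star (V x) (H x))) :=
      (hG.star (hVg.star hH)).mono (by omega) (by omega)
    exact (T1.add (T2.add T3)).congr' (fun x => (key x).symm)
  | @lstar b H hH ihH =>
    intro dy y hdy hy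
    have hb := hH.pos
    set M : ℕ → A → A := fun j x => (fun z => B.star x z)^[j] y with hM
    have hMs : ∀ j, SGood B dy (M j) := by
      intro j
      induction j with
      | zero => exact (SGood.const hdy hy).congr' (fun x => rfl)
      | succ j ihj =>
        exact ihj.lstar.congr' (fun x => (Function.iterate_succ_apply' _ _ _).symm)
    set V : A → A := fun x => ∑ j ∈ Finset.range k, (-1 : ℤ) ^ j • M j x with hV
    have hVg : SGood B dy V := SGood.sum (by omega) (fun j _ => (hMs j).negOnePow_smul j)
    have key : ∀ x, B.star (x + y) (H (x + y)) - B.star x (H x)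
        = B.star (x + y) (H (x + y) - H x)
          + (B.star (V x) (H x) + B.star x (B.star (V x) (H x))) := by
      intro x
      have hsplit := B.split hnil x y (H x)
      have hVx : (∑ j ∈ Finset.range k,
          (-1 : ℤ) ^ j • (fun z => B.star x z)^[j] y) = V x := rfl
      rw [hVx] at hsplit
      have hr : B.star (x + y) (H (x + y)) =
          B.star (x + y) (H x) + B.star (x + y) (H (x + y) - H x) := by
        rw [← B.star_add_right]; congr 1; abel
      rw [hr, ← hsplit]; abel
    have T1 : SGood B (b + dy) (fun x => B.star (x + y) (H (x + y) - H x)) := by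
      have S3 := (((ihH y hdy hy).translate (-y)).lstar).translate y
      exact S3.congr' (fun x => by
        have h1 : x + y + -y = x := by abel
        rw [h1])
    have T2 : SGood B (b + dy) (fun x => B.star (V x) (H x)) :=
      (hVg.star hH).mono (by omega) (by omega)
    have T3 : SGood B (b + dy) (fun x => B.star x (B.star (V x) (H x))) :=
      (hVg.star hH).lstar.mono (by omega) (by omega)
    exact (T1.add (T2.add T3)).congr' (fun x => (key x).symm)

end LeftBrace

namespace LeftBrace

variable {A : Type} [AddCommGroup A]

/-- Difference operator on functions `A → A` in direction `y`. -/
def diffOp (y : A) (G : A → A) : A → A := fun x => G (x + y) - G x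

lemma SGood.diffOp_iter {B : LeftBrace A} {k : ℕ} (hnil : B.schain k = ⊥) (y : A)
    {d : ℕ} {G : A → A} (h : SGood B d G) (r : ℕ) : SGood B (d + r) ((diffOp y)^[r] G) := by
  induction r with
  | zero => exact h
  | succ r ih =>
    have h1 := ih.dstab hnil y le_rfl (by rw [B.schain_one]; exact AddSubgroup.mem_top y)
    exact h1.congr' (fun x => by rw [Function.iterate_succ_apply', diffOp])

/-- Difference operator on sequences. -/
def ndiff {M : Type*} [AddCommGroup M] (h : ℕ → M) : ℕ → M := fun n => h (n + 1) - h n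

/-- Discrete Newton expansion. -/
lemma newton {M : Type*} [AddCommGroup M] (h : ℕ → M) (n : ℕ) :
    h n = ∑ r ∈ Finset.range (n + 1), n.choose r • (ndiff^[r] h) 0 := by
  induction n generalizing h with
  | zero => simp
  | succ n ih =>
    have e1 : h (n + 1) = h n + ndiff h n := by simp [ndiff]
    rw [e1, ih h, ih (ndiff h)]
    have hR : ∑ r ∈ Finset.range (n + 2), (n + 1).choose r • (ndiff^[r] h) 0
        = (∑ r ∈ Finset.range (n + 1),
            (n.choose r • (ndiff^[r + 1] h) 0 + n.choose (r + 1) • (ndiff^[r + 1] h) 0))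
          + h 0 := by
      rw [Finset.sum_range_succ' (fun r => (n + 1).choose r • (ndiff^[r] h) 0) (n + 1)]
      simp only [Nat.choose_succ_succ, add_nsmul, Nat.choose_zero_right, one_nsmul,
        Function.iterate_zero_apply]
    rw [hR, Finset.sum_add_distrib]
    have hfirst : ∑ r ∈ Finset.range (n + 1), n.choose r • (ndiff^[r + 1] h) 0
        = ∑ r ∈ Finset.range (n + 1), n.choose r • (ndiff^[r] (ndiff h)) 0 :=
      Finset.sum_congr rfl fun r _ => by rw [Function.iterate_succ_apply]
    have hsecond : ∑ r ∈ Finset.range (n + 1), n.choose (r + 1) • (ndiff^[r + 1] h) 0 + h 0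
        = ∑ r ∈ Finset.range (n + 1), n.choose r • (ndiff^[r] h) 0 := by
      have h3 := Finset.sum_range_succ' (fun r => n.choose r • (ndiff^[r] h) 0) (n + 1)
      rw [Finset.sum_range_succ (fun r => n.choose r • (ndiff^[r] h) 0) (n + 1)] at h3
      simp only [Nat.choose_succ_self, zero_nsmul, add_zero, Nat.choose_zero_right, one_nsmul,
        Function.iterate_zero_apply] at h3
      exact h3.symm
    rw [hfirst]
    rw [add_assoc, hsecond]
    abel

lemma ndiff_iter_smul (G : A → A) (a z : A) (r : ℕ) :
    ndiff^[r] (fun n => G (n • a + z)) = fun n => ((diffOp a)^[r] G) (n • a + z) := by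
  induction r generalizing G with
  | zero => rfl
  | succ r ih =>
    rw [Function.iterate_succ_apply]
    have h1 : ndiff (fun n => G (n • a + z)) = fun n => (diffOp a G) (n • a + z) := by
      funext n
      simp only [ndiff, diffOp]
      rw [succ_nsmul, add_right_comm]
    rw [h1, ih (diffOp a G), ← Function.iterate_succ_apply]

/-- Two-variable Taylor coefficients. -/
def Dcoef (F : A → A) (a b : A) (r s : ℕ) : A := ((diffOp b)^[s] ((diffOp a)^[r] F)) 0

lemma taylor (F : A → A) (a b : A) (n m : ℕ) :
    F (n • a + m • b) = ∑ r ∈ Finset.range (n + 1), ∑ s ∈ Finset.range (m + 1),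
      (n.choose r * m.choose s) • Dcoef F a b r s := by
  have h1 := newton (fun n' => F (n' • a + m • b)) n
  rw [h1]
  refine Finset.sum_congr rfl fun r _ => ?_
  have hfun := congrFun (ndiff_iter_smul F a (m • b) r) 0
  rw [hfun, zero_nsmul, zero_add]
  have h3 := newton (fun m' => ((diffOp a)^[r] F) (m' • b + 0)) m
  rw [add_zero] at h3
  rw [h3, Finset.smul_sum]
  refine Finset.sum_congr rfl fun s _ => ?_
  have hfun2 := congrFun (ndiff_iter_smul ((diffOp a)^[r] F) b 0 s) 0
  rw [hfun2, zero_nsmul, zero_add, smul_smul]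
  rfl

end LeftBrace

section NT

lemma cast_descFactorial_prod (p : ℕ) (n r : ℕ) :
    ((n.descFactorial r : ℕ) : ZMod p) = ∏ t ∈ Finset.range r, ((n : ZMod p) - t) := by
  induction r with
  | zero => simp
  | succ r ih =>
    rw [Nat.descFactorial_succ, Finset.prod_range_succ, ← ih]
    by_cases h : r ≤ n
    · rw [Nat.cast_mul, Nat.cast_sub h, mul_comm]
    · push_neg at h
      rw [Nat.descFactorial_eq_zero_iff_lt.mpr h]
      simp

lemma cast_choose_eq (p : ℕ) (hp : p.Prime) (n r : ℕ) (hr : r < p) :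
    ((n.choose r : ℕ) : ZMod p)
      = (∏ t ∈ Finset.range r, ((n : ZMod p) - t)) * ((r.factorial : ℕ) : ZMod p)⁻¹ := by
  haveI : Fact p.Prime := ⟨hp⟩
  have hfac : ((r.factorial : ℕ) : ZMod p) ≠ 0 := by
    rw [Ne, ZMod.natCast_eq_zero_iff]
    intro hdvd
    have := (Nat.Prime.dvd_factorial hp).mp hdvd
    omega
  have h1 : ((n.descFactorial r : ℕ) : ZMod p) = (r.factorial : ℕ) * (n.choose r : ℕ) := by
    rw [← Nat.cast_mul, Nat.descFactorial_eq_factorial_mul_choose]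
  field_simp
  rw [← cast_descFactorial_prod, h1]
  ring

lemma geom_vanish {p : ℕ} (hp : p.Prime) {m : ℕ} (hm : 1 ≤ m) (hmp : 2 ^ m < p) :
    ∑ i ∈ Finset.range (p - 1), ((2 : ZMod p) ^ m) ^ i = 0 := by
  haveI : Fact p.Prime := ⟨hp⟩
  have hp1 : 1 < p := hp.one_lt
  have h2m : (2 : ZMod p) ^ m = ((2 ^ m : ℕ) : ZMod p) := by push_cast; ring
  have hy0 : (2 : ZMod p) ^ m ≠ 0 := by
    rw [h2m, Ne, ZMod.natCast_eq_zero_iff]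
    intro hdvd
    have := Nat.le_of_dvd (by positivity) hdvd
    omega
  have hy1 : (2 : ZMod p) ^ m ≠ 1 := by
    rw [h2m]
    intro h
    have hv := congrArg ZMod.val h
    rw [ZMod.val_cast_of_lt hmp, ZMod.val_one p] at hv
    have : 2 ≤ 2 ^ m := by
      calc 2 = 2 ^ 1 := (pow_one 2).symm
      _ ≤ 2 ^ m := Nat.pow_le_pow_right (by omega) hm
    omega
  rw [geom_sum_eq hy1, ZMod.pow_card_sub_one_eq_one hy0, sub_self, zero_div]

lemma NT {p K : ℕ} (hp : p.Prime) (hpk : 2 ^ K < p) {r s : ℕ} (hr : 1 ≤ r) (hs : 1 ≤ s)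
    (hrs : r + s + 2 ≤ K) :
    ∑ i ∈ Finset.range (p - 1),
      ((2 : ZMod p) ^ i)⁻¹ * (((2 ^ i).choose r * (2 ^ i).choose s : ℕ) : ZMod p) = 0 := by
  haveI : Fact p.Prime := ⟨hp⟩
  have hKp : K < p := lt_of_le_of_lt (Nat.le_of_lt (Nat.lt_two_pow_self (n := K))) hpk
  have h2 : (2 : ZMod p) ≠ 0 := by
    have h4 : 4 ≤ 2 ^ K := by
      calc (4 : ℕ) = 2 ^ 2 := by norm_num
      _ ≤ 2 ^ K := Nat.pow_le_pow_right (by omega) (by omega)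
    have : ((2 : ℕ) : ZMod p) ≠ 0 := by
      rw [Ne, ZMod.natCast_eq_zero_iff]
      intro hdvd
      have := Nat.le_of_dvd (by omega) hdvd
      omega
    simpa using this
  -- polynomial with the peeled factors
  set P : Polynomial (ZMod p) :=
    (∏ t ∈ Finset.range (r - 1), (Polynomial.X - Polynomial.C ((t : ZMod p) + 1))) *
    (∏ t ∈ Finset.range (s - 1), (Polynomial.X - Polynomial.C ((t : ZMod p) + 1))) with hP
  have bgen : ∀ m : ℕ, (∏ t ∈ Finset.range m,
      (Polynomial.X - Polynomial.C ((t : ZMod p) + 1))).natDegree ≤ m := by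
    intro m
    refine le_trans (Polynomial.natDegree_prod_le _ _) ?_
    refine le_trans (Finset.sum_le_card_nsmul _ _ 1
      fun t _ => le_of_eq (Polynomial.natDegree_X_sub_C _)) ?_
    simp
  have hdegP : P.natDegree ≤ r + s - 2 := by
    rw [hP]
    refine le_trans (Polynomial.natDegree_mul_le) ?_
    have := bgen (r - 1)
    have := bgen (s - 1)
    omega
  -- rewrite each summand
  have hterm : ∀ i : ℕ, ((2 : ZMod p) ^ i)⁻¹ * (((2 ^ i).choose r * (2 ^ i).choose s : ℕ) : ZMod p)
      = (((r.factorial : ℕ) : ZMod p)⁻¹ * ((s.factorial : ℕ) : ZMod p)⁻¹) *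
        ((2 : ZMod p) ^ i * P.eval ((2 : ZMod p) ^ i)) := by
    intro i
    set x : ZMod p := (2 : ZMod p) ^ i with hx
    have hxcast : ((2 ^ i : ℕ) : ZMod p) = x := by push_cast; ring
    have hprod : ∀ m : ℕ, 1 ≤ m → (∏ t ∈ Finset.range m, (x - t))
        = (∏ t ∈ Finset.range (m - 1), (x - ((t : ZMod p) + 1))) * x := by
      intro m hm
      obtain ⟨m', rfl⟩ : ∃ m', m = m' + 1 := ⟨m - 1, by omega⟩
      rw [Finset.prod_range_succ']
      simp [add_comm]
    have hc1 : (((2 ^ i).choose r : ℕ) : ZMod p)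
        = (∏ t ∈ Finset.range (r - 1), (x - ((t : ZMod p) + 1))) * x *
          ((r.factorial : ℕ) : ZMod p)⁻¹ := by
      rw [cast_choose_eq p hp _ r (by omega), hxcast, hprod r hr]
    have hc2 : (((2 ^ i).choose s : ℕ) : ZMod p)
        = (∏ t ∈ Finset.range (s - 1), (x - ((t : ZMod p) + 1))) * x *
          ((s.factorial : ℕ) : ZMod p)⁻¹ := by
      rw [cast_choose_eq p hp _ s (by omega), hxcast, hprod s hs]
    have hevalP : P.eval x = (∏ t ∈ Finset.range (r - 1), (x - ((t : ZMod p) + 1))) *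
        (∏ t ∈ Finset.range (s - 1), (x - ((t : ZMod p) + 1))) := by
      rw [hP]
      simp [Polynomial.eval_prod]
    have hxne : x ≠ 0 := pow_ne_zero _ h2
    rw [Nat.cast_mul, hc1, hc2, hevalP]
    have hre : x⁻¹ * ((∏ t ∈ Finset.range (r - 1), (x - ((t : ZMod p) + 1))) * x *
          ((r.factorial : ℕ) : ZMod p)⁻¹ *
          ((∏ t ∈ Finset.range (s - 1), (x - ((t : ZMod p) + 1))) * x *
            ((s.factorial : ℕ) : ZMod p)⁻¹))
        = ((r.factorial : ℕ) : ZMod p)⁻¹ * ((s.factorial : ℕ) : ZMod p)⁻¹ *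
          ((x⁻¹ * x) * (x * ((∏ t ∈ Finset.range (r - 1), (x - ((t : ZMod p) + 1))) *
            (∏ t ∈ Finset.range (s - 1), (x - ((t : ZMod p) + 1)))))) := by ring
    rw [hre, inv_mul_cancel₀ hxne, one_mul]
  rw [Finset.sum_congr rfl fun i _ => hterm i, ← Finset.mul_sum]
  have hmain : ∑ i ∈ Finset.range (p - 1), (2 : ZMod p) ^ i * P.eval ((2 : ZMod p) ^ i) = 0 := by
    have hev : ∀ i : ℕ, P.eval ((2 : ZMod p) ^ i)
        = ∑ t ∈ Finset.range (P.natDegree + 1), P.coeff t * ((2 : ZMod p) ^ i) ^ t := by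
      intro i
      exact Polynomial.eval_eq_sum_range _
    rw [Finset.sum_congr rfl fun i _ => by rw [hev i]]
    rw [Finset.sum_congr rfl fun i (_ : i ∈ Finset.range (p - 1)) => by
      rw [Finset.mul_sum]]
    rw [Finset.sum_comm]
    refine Finset.sum_eq_zero fun t ht => ?_
    rw [Finset.mem_range] at ht
    have hcomm : ∀ i : ℕ, (2 : ZMod p) ^ i * (P.coeff t * ((2 : ZMod p) ^ i) ^ t)
        = P.coeff t * ((2 : ZMod p) ^ (t + 1)) ^ i := by
      intro i
      generalize P.coeff t = cP
      have h1 : ((2 : ZMod p) ^ i) ^ t = ((2 : ZMod p) ^ t) ^ i := pow_right_comm 2 i t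
      have h2 : ((2 : ZMod p) ^ (t + 1)) ^ i = ((2 : ZMod p) ^ t) ^ i * (2 : ZMod p) ^ i := by
        rw [pow_succ, mul_pow]
      rw [h1, h2]; ring
    rw [Finset.sum_congr rfl fun i _ => hcomm i, ← Finset.mul_sum]
    rw [geom_vanish hp (by omega) (by
      have : 2 ^ (t + 1) ≤ 2 ^ K := Nat.pow_le_pow_right (by omega) (by omega)
      omega), mul_zero]
  rw [hmain, mul_zero]

end NT

namespace LeftBrace

variable {A : Type} [AddCommGroup A]

lemma Dcoef_eq_zero {B : LeftBrace A} {k : ℕ} (hnil : B.schain k = ⊥) (c a b : A) {r s : ℕ}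
    (h : k ≤ 1 + r + s) : Dcoef (fun x => B.star x c) a b r s = 0 := by
  have hF : SGood B 1 (fun x => B.star x c) :=
    (SGood.const le_rfl (by rw [B.schain_one]; exact AddSubgroup.mem_top c)).lstar
  have h1 := (((hF.diffOp_iter hnil a r).diffOp_iter hnil b s).mem) 0
  have hb : B.schain (1 + r + s) = ⊥ := B.schain_eq_bot hnil h
  rw [hb] at h1
  simpa [Dcoef] using h1

end LeftBrace

section Main

variable {A : Type} [AddCommGroup A]

theorem main_left {p k : ℕ} (hp : p.Prime) [Module (ZMod p) A] (B : LeftBrace A)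
    (hnil : B.schain k = ⊥) (hdeg : B.schain (k - 1) ≠ ⊥) (hpk : 2 ^ k < p) (a b c : A) :
    (∑ i ∈ Finset.range (p - 1), ((2 : ZMod p) ^ i)⁻¹ • B.star ((2 ^ i : ℕ) • (a + b)) c)
      = (∑ i ∈ Finset.range (p - 1), ((2 : ZMod p) ^ i)⁻¹ • B.star ((2 ^ i : ℕ) • a) c)
        + ∑ i ∈ Finset.range (p - 1), ((2 : ZMod p) ^ i)⁻¹ • B.star ((2 ^ i : ℕ) • b) c := by
  haveI : Fact p.Prime := ⟨hp⟩
  have hk2 : 2 ≤ k := by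
    rcases Nat.lt_or_ge k 2 with hk | hk
    · interval_cases k
      · exact absurd hnil hdeg
      · exact absurd (by rw [B.schain_zero, ← B.schain_one]; exact hnil) hdeg
    · exact hk
  set D : ℕ → ℕ → A := LeftBrace.Dcoef (fun x => B.star x c) a b with hD
  have hD0 : ∀ r s : ℕ, k ≤ r + s + 1 → D r s = 0 := fun r s h =>
    LeftBrace.Dcoef_eq_zero hnil c a b (by omega)
  have ext1 : ∀ (M N : ℕ) (f : ℕ → A), (∀ j, M ≤ j → f j = 0) → (∀ j, N ≤ j → f j = 0) →
      ∑ j ∈ Finset.range M, f j = ∑ j ∈ Finset.range N, f j := by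
    intro M N f hM hN
    have h1 := Finset.sum_subset (Finset.range_subset_range.mpr (le_max_left M N))
      (fun j _ hj => hM j (by simpa using hj))
    have h2 := Finset.sum_subset (Finset.range_subset_range.mpr (le_max_right M N))
      (fun j _ hj => hN j (by simpa using hj))
    rw [h1, h2]
  have taylorK : ∀ n m : ℕ, B.star (n • a + m • b) c
      = ∑ r ∈ Finset.range k, ∑ s ∈ Finset.range k, (n.choose r * m.choose s) • D r s := by
    intro n m
    have t := LeftBrace.taylor (fun x => B.star x c) a b n m
    rw [t, hD]
    have step1 : ∀ r : ℕ, ∑ s ∈ Finset.range (m + 1),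
          (n.choose r * m.choose s) • LeftBrace.Dcoef (fun x => B.star x c) a b r s
        = ∑ s ∈ Finset.range k,
          (n.choose r * m.choose s) • LeftBrace.Dcoef (fun x => B.star x c) a b r s := by
      intro r
      refine ext1 _ _ _ (fun s hs => ?_) (fun s hs => ?_)
      · rw [Nat.choose_eq_zero_of_lt (show m < s by omega), mul_zero, zero_smul]
      · rw [show LeftBrace.Dcoef (fun x => B.star x c) a b r s = D r s from rfl,
          hD0 r s (by omega), smul_zero]
    rw [Finset.sum_congr rfl fun r _ => step1 r]
    refine ext1 _ _ _ (fun r hr => ?_) (fun r hr => ?_)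
    · exact Finset.sum_eq_zero fun s _ => by
        rw [Nat.choose_eq_zero_of_lt (show n < r by omega), zero_mul, zero_smul]
    · exact Finset.sum_eq_zero fun s _ => by
        rw [show LeftBrace.Dcoef (fun x => B.star x c) a b r s = D r s from rfl,
          hD0 r s (by omega), smul_zero]
  rw [← sub_eq_zero, ← Finset.sum_add_distrib, ← Finset.sum_sub_distrib]
  have hterm : ∀ i : ℕ,
      ((2 : ZMod p) ^ i)⁻¹ • B.star ((2 ^ i : ℕ) • (a + b)) c
        - (((2 : ZMod p) ^ i)⁻¹ • B.star ((2 ^ i : ℕ) • a) c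
          + ((2 : ZMod p) ^ i)⁻¹ • B.star ((2 ^ i : ℕ) • b) c)
      = ∑ r ∈ Finset.range k, ∑ s ∈ Finset.range k,
          (((2 : ZMod p) ^ i)⁻¹ *
            (((((2 ^ i : ℕ)).choose r * ((2 ^ i : ℕ)).choose s : ℕ) : ZMod p)
              - ((((2 ^ i : ℕ)).choose r * (0).choose s : ℕ) : ZMod p)
              - ((((0).choose r) * ((2 ^ i : ℕ)).choose s : ℕ) : ZMod p))) • D r s := by
    intro i
    have e1 : B.star ((2 ^ i : ℕ) • (a + b)) c
        = B.star ((2 ^ i : ℕ) • a + (2 ^ i : ℕ) • b) c := by rw [smul_add]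
    have e2 : B.star ((2 ^ i : ℕ) • a) c
        = B.star ((2 ^ i : ℕ) • a + (0 : ℕ) • b) c := by rw [zero_smul, add_zero]
    have e3 : B.star ((2 ^ i : ℕ) • b) c
        = B.star ((0 : ℕ) • a + (2 ^ i : ℕ) • b) c := by rw [zero_smul, zero_add]
    rw [e1, e2, e3, taylorK, taylorK, taylorK]
    simp only [Finset.smul_sum]
    rw [← Finset.sum_add_distrib, ← Finset.sum_sub_distrib]
    refine Finset.sum_congr rfl fun r _ => ?_
    rw [← Finset.sum_add_distrib, ← Finset.sum_sub_distrib]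
    refine Finset.sum_congr rfl fun s _ => ?_
    rw [← Nat.cast_smul_eq_nsmul (ZMod p) _ (D r s), smul_smul,
      ← Nat.cast_smul_eq_nsmul (ZMod p) _ (D r s), smul_smul,
      ← Nat.cast_smul_eq_nsmul (ZMod p) _ (D r s), smul_smul,
      sub_add_eq_sub_sub, ← sub_smul, ← sub_smul]
    congr 1
    ring
  rw [Finset.sum_congr rfl fun i _ => hterm i]
  rw [Finset.sum_comm]
  refine Finset.sum_eq_zero fun r hr => ?_
  rw [Finset.sum_comm]
  refine Finset.sum_eq_zero fun s hs => ?_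
  rw [Finset.mem_range] at hr hs
  rw [← Finset.sum_smul]
  rcases Nat.eq_zero_or_pos r with hr0 | hr1
  · rcases Nat.eq_zero_or_pos s with hs0 | hs1
    · subst hr0; subst hs0
      have h00 : D 0 0 = 0 := by
        rw [hD]
        show B.star ((0 : A)) c = 0
        exact B.star_zero_left c
      rw [h00, smul_zero]
    · subst hr0
      have hz : ∀ i ∈ Finset.range (p - 1),
          (((2 : ZMod p) ^ i)⁻¹ *
            (((((2 ^ i : ℕ)).choose 0 * ((2 ^ i : ℕ)).choose s : ℕ) : ZMod p)
              - ((((2 ^ i : ℕ)).choose 0 * (0).choose s : ℕ) : ZMod p)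
              - ((((0).choose 0) * ((2 ^ i : ℕ)).choose s : ℕ) : ZMod p))) = 0 := by
        intro i _
        rw [Nat.choose_zero_right, Nat.choose_zero_right, Nat.choose_eq_zero_of_lt hs1]
        simp
      rw [Finset.sum_congr rfl hz, Finset.sum_const, smul_zero, zero_smul]
  · rcases Nat.eq_zero_or_pos s with hs0 | hs1
    · subst hs0
      have hz : ∀ i ∈ Finset.range (p - 1),
          (((2 : ZMod p) ^ i)⁻¹ *
            (((((2 ^ i : ℕ)).choose r * ((2 ^ i : ℕ)).choose 0 : ℕ) : ZMod p)
              - ((((2 ^ i : ℕ)).choose r * (0).choose 0 : ℕ) : ZMod p)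
              - ((((0).choose r) * ((2 ^ i : ℕ)).choose 0 : ℕ) : ZMod p))) = 0 := by
        intro i _
        rw [Nat.choose_zero_right, Nat.choose_zero_right, Nat.choose_eq_zero_of_lt hr1]
        simp
      rw [Finset.sum_congr rfl hz, Finset.sum_const, smul_zero, zero_smul]
    · rcases Nat.lt_or_ge (r + s + 1) k with hlt | hge
      · have hz : ∀ i ∈ Finset.range (p - 1),
            (((2 : ZMod p) ^ i)⁻¹ *
              (((((2 ^ i : ℕ)).choose r * ((2 ^ i : ℕ)).choose s : ℕ) : ZMod p)
                - ((((2 ^ i : ℕ)).choose r * (0).choose s : ℕ) : ZMod p)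
                - ((((0).choose r) * ((2 ^ i : ℕ)).choose s : ℕ) : ZMod p)))
            = ((2 : ZMod p) ^ i)⁻¹ * ((((2 ^ i : ℕ)).choose r * ((2 ^ i : ℕ)).choose s : ℕ) : ZMod p) := by
          intro i _
          rw [Nat.choose_eq_zero_of_lt hs1, Nat.choose_eq_zero_of_lt hr1]
          simp
        rw [Finset.sum_congr rfl hz, NT hp hpk hr1 hs1 (by omega), zero_smul]
      · rw [hD0 r s (by omega), smul_zero]

end Main

/-- on a strongly nilpotent `F_p`-brace of degree `k` with `2^k < p`,
the operation `a · b = Σ_{i=0}^{p-2} 2^{-i}((2^i a) * b)` is additive in each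
variable. -/
theorem braceMul_add_left_and_right {p k : ℕ} (hp : p.Prime)
    [Module (ZMod p) A] (B : LeftBrace A)
    (hFp : ∀ (α : ZMod p) (a b : A), B.star a (α • b) = α • B.star a b)
    (hnil : B.schain k = ⊥) (hdeg : B.schain (k - 1) ≠ ⊥) (hpk : 2 ^ k < p)
    (a b c : A) :
    braceMul p B (a + b) c = braceMul p B a c + braceMul p B b c ∧
      braceMul p B a (b + c) = braceMul p B a b + braceMul p B a c := by
  constructor
  · simp only [braceMul]
    exact main_left hp B hnil hdeg hpk a b c
  · simp only [braceMul]
    rw [← Finset.sum_add_distrib]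
    refine Finset.sum_congr rfl fun i _ => ?_
    rw [B.star_add_right, smul_add]
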